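/- There is no quasi-metric space on four points with all distances in {0,1,2} whose betweenness is isomorphic to the betweenness of Q(4). That is, for every quasi-metric ρ on a four-element set W with ρ x y ∈ {0,1,2} for all x, y, the betweenness B(ρ) is not isomorphic to B(Q(4)) = {(p,q,r), (r,p,q), (s,q,p), (q,p,s)}. -/
import Mathlib


/-- A quasi-metric on `V`: nonnegative, vanishing exactly on the diagonal,
and satisfying the (directed) triangle inequality. -/
def IsQuasiMetric {V : Type*} (d : V → V → ℝ) : Prop :=
  (∀ x y, 0 ≤ d x y) ∧ (∀ x y, d x y = 0 ↔ x = y) ∧ (∀ x y z, d x z ≤ d x y + d y z)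

/-- Betweenness: `y` lies between `x` and `z` (all three pairwise distinct). -/
def BtwQM {V : Type*} (d : V → V → ℝ) (x y z : V) : Prop :=
  x ≠ y ∧ y ≠ z ∧ x ≠ z ∧ d x z = d x y + d y z

/-- The line through `x` and `y`. -/
def lineQM {V : Type*} (d : V → V → ℝ) (x y : V) : Set V :=
  {z | d z y = d z x + d x y ∨ d x y = d x z + d z y ∨ d x z = d x y + d y z}

/-- The set of all lines of the space. -/
def linesQM {V : Type*} (d : V → V → ℝ) : Set (Set V) :=
  {ℓ | ∃ x y, x ≠ y ∧ ℓ = lineQM d x y}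

/-- The four points of the space `Q(4)`. -/
inductive P4 : Type
  | p | s | q | r
deriving DecidableEq

open P4

/-- The quasi-metric of the space `Q(4)`. -/
def dQ4 : P4 → P4 → ℝ
  | p, p => 0 | p, s => 1 | p, q => 1 | p, r => 3
  | s, p => 3 | s, s => 0 | s, q => 2 | s, r => 3
  | q, p => 1 | q, s => 2 | q, q => 0 | q, r => 2
  | r, p => 1 | r, s => 1 | r, q => 2 | r, r => 0

/-- The betweenness of `Q(4)`. -/
def BQ4 : Set (P4 × P4 × P4) := {(p, q, r), (r, p, q), (s, q, p), (q, p, s)}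

set_option maxHeartbeats 4000000 in
/-- no quasi-metric space on four points with distances in `{0,1,2}`
has a betweenness isomorphic to that of `Q(4)`. -/
theorem stmt_5 (W : Type) [Fintype W] (hW : Fintype.card W = 4)
    (ρ : W → W → ℝ) (hρ : IsQuasiMetric ρ)
    (hval : ∀ x y, ρ x y ∈ ({0, 1, 2} : Set ℝ)) :
    ¬ ∃ f : P4 ≃ W, ∀ x y z : P4,
        (x, y, z) ∈ BQ4 ↔ BtwQM ρ (f x) (f y) (f z) := by
  rintro ⟨f, hf⟩
  obtain ⟨hnn, hzero, htri⟩ := hρ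
  -- distinct images have distance 1 or 2
  have hval12 : ∀ x y : P4, x ≠ y → ρ (f x) (f y) = 1 ∨ ρ (f x) (f y) = 2 := by
    intro x y hxy
    rcases hval (f x) (f y) with h | h | h
    · exact absurd (f.injective ((hzero _ _).mp h)) hxy
    · exact Or.inl h
    · exact Or.inr h
  -- positive betweenness facts
  have h1 := ((hf p q r).mp (by simp [BQ4])).2.2.2
  have h2 := ((hf r p q).mp (by simp [BQ4])).2.2.2
  have h3 := ((hf s q p).mp (by simp [BQ4])).2.2.2
  -- negative facts
  have m1 : (s, q, r) ∉ BQ4 := by simp [BQ4]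
  have m2 : (s, r, p) ∉ BQ4 := by simp [BQ4]
  have n1 : ρ (f s) (f r) ≠ ρ (f s) (f q) + ρ (f q) (f r) := fun h =>
    m1 ((hf s q r).mpr ⟨f.injective.ne (by decide), f.injective.ne (by decide),
      f.injective.ne (by decide), h⟩)
  have n2 : ρ (f s) (f p) ≠ ρ (f s) (f r) + ρ (f r) (f p) := fun h =>
    m2 ((hf s r p).mpr ⟨f.injective.ne (by decide), f.injective.ne (by decide),
      f.injective.ne (by decide), h⟩)
  rcases hval12 p q (by decide) with a1 | a1 <;>
  rcases hval12 q r (by decide) with a2 | a2 <;>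
  rcases hval12 p r (by decide) with a3 | a3 <;>
  rcases hval12 r p (by decide) with a4 | a4 <;>
  rcases hval12 r q (by decide) with a5 | a5 <;>
  rcases hval12 s q (by decide) with a6 | a6 <;>
  rcases hval12 q p (by decide) with a7 | a7 <;>
  rcases hval12 s p (by decide) with a8 | a8 <;>
  rcases hval12 s r (by decide) with a9 | a9 <;>
  first
  | linarith
  | exact n1 (by linarith)
  | exact n2 (by linarith)
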